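/- Let r ≥ 1, let η ∈ ℂ satisfy |η| = 1 and η ≠ 1, and let S ⊆ Fin r with |S| ≥ 2. Define the gate G_{η,S} on ℂ^({0,1}^r) by (G_{η,S} ψ)(x) = η·ψ(x) if x_i = 1 for all i ∈ S, and (G_{η,S} ψ)(x) = ψ(x) otherwise. Let ψ be any r-qubit state vector and let φ = G_{η,S} ψ. Then at least one of the following holds: (1) ψ is S-entangled; (2) φ is S-entangled; (3) G_{η,S} ψ = ψ, or there exists T ⊊ S with G_{η,S} ψ = G_{η,T} ψ ≠ ψ. -/
import Mathlib


open scoped BigOperators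

/-- The state space of `r` qubits: amplitudes indexed by bit strings of length `r`. -/
abbrev QState (r : ℕ) := (Fin r → Bool) → ℂ

/-- A unit vector (state vector): Euclidean norm 1. -/
def UnitVec {r : ℕ} (ψ : QState r) : Prop := ∑ x, ‖ψ x‖ ^ 2 = 1

/-- The gate `G_{η,S}` on the qubits in `S`: multiplies the amplitude by `η` exactly
when all bits in `S` are `1`. -/
noncomputable def gGate {r : ℕ} (η : ℂ) (S : Finset (Fin r)) (ψ : QState r) : QState r :=
  fun x => if ∀ i ∈ S, x i = true then η * ψ x else ψ x

/-- `{A, B}` is a bipartition of the qubits. -/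
def Bipartition {r : ℕ} (A B : Finset (Fin r)) : Prop :=
  A.Nonempty ∧ B.Nonempty ∧ Disjoint A B ∧ A ∪ B = Finset.univ

/-- `ψ` separates at `{A, B}`: it is a tensor product of a state on the qubits in `A`
and a state on the qubits in `B`. -/
def SeparatesAt {r : ℕ} (ψ : QState r) (A B : Finset (Fin r)) : Prop :=
  ∃ (ψA : ({i : Fin r // i ∈ A} → Bool) → ℂ) (ψB : ({i : Fin r // i ∈ B} → Bool) → ℂ),
    ∀ x : Fin r → Bool, ψ x = ψA (fun i => x i.1) * ψB (fun i => x i.1)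

/-- `ψ` is `S`-separable: it separates at some bipartition both of whose parts
meet `S`. -/
def SSeparable {r : ℕ} (S : Finset (Fin r)) (ψ : QState r) : Prop :=
  ∃ A B : Finset (Fin r),
    Bipartition A B ∧ (A ∩ S).Nonempty ∧ (B ∩ S).Nonempty ∧ SeparatesAt ψ A B

/-- `ψ` is `S`-entangled: not `S`-separable. -/
def SEntangled {r : ℕ} (S : Finset (Fin r)) (ψ : QState r) : Prop :=
  ¬ SSeparable S ψ

/-! ### Auxiliary machinery -/

/-- Mixing two bit strings along a cut: take `x` on `A` and `y` off `A`. -/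
private def mixf {r : ℕ} (A : Finset (Fin r)) (x y : Fin r → Bool) : Fin r → Bool :=
  fun i => if i ∈ A then x i else y i

private lemma sep_eval {r : ℕ} {ψ : QState r} {A B : Finset (Fin r)} (hd : Disjoint A B)
    {f : ({i : Fin r // i ∈ A} → Bool) → ℂ} {g : ({i : Fin r // i ∈ B} → Bool) → ℂ}
    (h : ∀ x : Fin r → Bool, ψ x = f (fun i => x i.1) * g (fun i => x i.1))
    (x y : Fin r → Bool) :
    ψ (mixf A x y) = f (fun i => x i.1) * g (fun i => y i.1) := by
  rw [h]
  have e1 : (fun i : {i : Fin r // i ∈ A} => mixf A x y i.1) = fun i => x i.1 := by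
    funext i; simp [mixf, i.2]
  have e2 : (fun i : {i : Fin r // i ∈ B} => mixf A x y i.1) = fun i => y i.1 := by
    funext i
    have hi : i.1 ∉ A := Finset.disjoint_right.mp hd i.2
    simp [mixf, hi]
  rw [e1, e2]

private lemma sep_minor {r : ℕ} {ψ : QState r} {A B : Finset (Fin r)} (hd : Disjoint A B)
    (hsep : SeparatesAt ψ A B) (x y : Fin r → Bool) :
    ψ (mixf A x y) * ψ (mixf A y x) = ψ x * ψ y := by
  obtain ⟨f, g, h⟩ := hsep
  rw [sep_eval hd h, sep_eval hd h, h x, h y]; ring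

private lemma sep_mix_ne {r : ℕ} {ψ : QState r} {A B : Finset (Fin r)} (hd : Disjoint A B)
    (hsep : SeparatesAt ψ A B) {x y : Fin r → Bool} (hx : ψ x ≠ 0) (hy : ψ y ≠ 0) :
    ψ (mixf A x y) ≠ 0 := by
  obtain ⟨f, g, h⟩ := hsep
  rw [sep_eval hd h]
  rw [h] at hx hy
  exact mul_ne_zero (left_ne_zero_of_mul hx) (right_ne_zero_of_mul hy)

private lemma sep_symm {r : ℕ} {ψ : QState r} {A B : Finset (Fin r)}
    (h : SeparatesAt ψ A B) : SeparatesAt ψ B A := by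
  obtain ⟨f, g, hfg⟩ := h
  exact ⟨g, f, fun x => (hfg x).trans (mul_comm _ _)⟩

/-- The core contradiction: if `ψ` separates at `(A,B)`, `gGate η S ψ` separates at
`(A',B')`, the all-ones-on-`S` point `u` is in the support, and there are support points
with a zero bit in `S ∩ A ∩ A'` resp. `S ∩ B ∩ B'`, then `η = 1`. -/
private lemma core {r : ℕ} {η : ℂ} (hη0 : η ≠ 0) (hη1 : η ≠ 1)
    {S A B A' B' : Finset (Fin r)}
    (hdAB : Disjoint A B) (hcAB : A ∪ B = Finset.univ)
    (hdA' : Disjoint A' B') (hcA' : A' ∪ B' = Finset.univ)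
    {ψ : QState r} (hsep : SeparatesAt ψ A B)
    (hsep' : SeparatesAt (gGate η S ψ) A' B')
    {u : Fin r → Bool} (hu0 : ψ u ≠ 0) (huS : ∀ i ∈ S, u i = true)
    {z : Fin r → Bool} (hz0 : ψ z ≠ 0) {i₀ : Fin r}
    (hi₀S : i₀ ∈ S) (hi₀A : i₀ ∈ A) (hi₀A' : i₀ ∈ A') (hzi : z i₀ = false)
    {w : Fin r → Bool} (hw0 : ψ w ≠ 0) {j₀ : Fin r}
    (hj₀S : j₀ ∈ S) (hj₀B : j₀ ∈ B) (hj₀B' : j₀ ∈ B') (hwj : w j₀ = false) :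
    False := by
  obtain ⟨f, g, hfg⟩ := hsep
  have hsepAB : SeparatesAt ψ A B := ⟨f, g, hfg⟩
  have hj₀A : j₀ ∉ A := Finset.disjoint_right.mp hdAB hj₀B
  have hj₀A' : j₀ ∉ A' := Finset.disjoint_right.mp hdA' hj₀B'
  -- gate evaluation helpers
  have hpos : ∀ x : Fin r → Bool, (∀ i ∈ S, x i = true) → gGate η S ψ x = η * ψ x := by
    intro x h
    show (if ∀ i ∈ S, x i = true then η * ψ x else ψ x) = η * ψ x
    rw [if_pos h]
  have hneg : ∀ x : Fin r → Bool, ¬(∀ i ∈ S, x i = true) → gGate η S ψ x = ψ x := by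
    intro x h
    show (if ∀ i ∈ S, x i = true then η * ψ x else ψ x) = ψ x
    rw [if_neg h]
  have hne : ∀ x : Fin r → Bool, ψ x ≠ 0 → gGate η S ψ x ≠ 0 := by
    intro x hx
    show (if ∀ i ∈ S, x i = true then η * ψ x else ψ x) ≠ 0
    split_ifs
    · exact mul_ne_zero hη0 hx
    · exact hx
  have hne' : ∀ x : Fin r → Bool, gGate η S ψ x ≠ 0 → ψ x ≠ 0 := by
    intro x h hx
    apply h
    show (if ∀ i ∈ S, x i = true then η * ψ x else ψ x) = 0
    split_ifs <;> simp [hx]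
  -- the special support point `v`
  set v : Fin r → Bool := mixf A (mixf A' z u) (mixf A' u w) with hvdef
  have hv0 : ψ v ≠ 0 :=
    sep_mix_ne hdAB hsepAB
      (hne' _ (sep_mix_ne hdA' hsep' (hne z hz0) (hne u hu0)))
      (hne' _ (sep_mix_ne hdA' hsep' (hne u hu0) (hne w hw0)))
  have hvi₀ : v i₀ = false := by simp [hvdef, mixf, hi₀A, hi₀A', hzi]
  have hvj₀ : v j₀ = false := by simp [hvdef, mixf, hj₀A, hj₀A', hwj]
  have hv12 : ∀ i, i ∈ S → i ∈ A → i ∉ A' → v i = true := by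
    intro i h1 h2 h3; simp [hvdef, mixf, h2, h3, huS i h1]
  have hv21 : ∀ i, i ∈ S → i ∉ A → i ∈ A' → v i = true := by
    intro i h1 h2 h3; simp [hvdef, mixf, h2, h3, huS i h1]
  -- auxiliary mixed points
  set vh : Fin r → Bool := mixf A v u with hvhdef
  set vc : Fin r → Bool := mixf A u v with hvcdef
  set m₁ : Fin r → Bool := mixf A' v u with hm₁def
  set m₂ : Fin r → Bool := mixf A' u v with hm₂def
  set n₁ : Fin r → Bool := mixf A' vh u with hn₁def
  set n₂ : Fin r → Bool := mixf A' u vh with hn₂def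
  set n₃ : Fin r → Bool := mixf A' vc u with hn₃def
  set n₄ : Fin r → Bool := mixf A' u vc with hn₄def
  -- whether the gate fires at each point
  have hEv : ¬ ∀ i ∈ S, v i = true := fun h => by simpa [hvi₀] using h i₀ hi₀S
  have hEm₁ : ¬ ∀ i ∈ S, m₁ i = true := fun h => by
    simpa [hm₁def, mixf, hi₀A', hvi₀] using h i₀ hi₀S
  have hEm₂ : ¬ ∀ i ∈ S, m₂ i = true := fun h => by
    simpa [hm₂def, mixf, hj₀A', hvj₀] using h j₀ hj₀S
  have hEvh : ¬ ∀ i ∈ S, vh i = true := fun h => by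
    simpa [hvhdef, mixf, hi₀A, hvi₀] using h i₀ hi₀S
  have hEvc : ¬ ∀ i ∈ S, vc i = true := fun h => by
    simpa [hvcdef, mixf, hj₀A, hvj₀] using h j₀ hj₀S
  have hEn₁ : ¬ ∀ i ∈ S, n₁ i = true := fun h => by
    simpa [hn₁def, hvhdef, mixf, hi₀A', hi₀A, hvi₀] using h i₀ hi₀S
  have hEn₄ : ¬ ∀ i ∈ S, n₄ i = true := fun h => by
    simpa [hn₄def, hvcdef, mixf, hj₀A', hj₀A, hvj₀] using h j₀ hj₀S
  have hEn₂ : ∀ i ∈ S, n₂ i = true := by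
    intro i hi
    by_cases hiA' : i ∈ A'
    · simp [hn₂def, mixf, hiA', huS i hi]
    · by_cases hiA : i ∈ A
      · simp [hn₂def, hvhdef, mixf, hiA', hiA, hv12 i hi hiA hiA']
      · simp [hn₂def, hvhdef, mixf, hiA', hiA, huS i hi]
  have hEn₃ : ∀ i ∈ S, n₃ i = true := by
    intro i hi
    by_cases hiA' : i ∈ A'
    · by_cases hiA : i ∈ A
      · simp [hn₃def, hvcdef, mixf, hiA', hiA, huS i hi]
      · simp [hn₃def, hvcdef, mixf, hiA', hiA, hv21 i hi hiA hiA']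
    · simp [hn₃def, mixf, hiA', huS i hi]
  -- the three minor identities for the gated state, across (A', B')
  have hMv := sep_minor hdA' hsep' v u
  rw [← hm₁def, ← hm₂def, hneg m₁ hEm₁, hneg m₂ hEm₂, hneg v hEv, hpos u huS] at hMv
  have hMh := sep_minor hdA' hsep' vh u
  rw [← hn₁def, ← hn₂def, hneg n₁ hEn₁, hpos n₂ hEn₂, hneg vh hEvh, hpos u huS] at hMh
  have hII : ψ n₁ * ψ n₂ = ψ vh * ψ u := mul_left_cancel₀ hη0 (by linear_combination hMh)
  have hMc := sep_minor hdA' hsep' vc u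
  rw [← hn₃def, ← hn₄def, hpos n₃ hEn₃, hneg n₄ hEn₄, hneg vc hEvc, hpos u huS] at hMc
  have hIII : ψ n₃ * ψ n₄ = ψ vc * ψ u := mul_left_cancel₀ hη0 (by linear_combination hMc)
  -- minor identity for ψ across (A, B)
  have hIV := sep_minor hdAB hsepAB v u
  rw [← hvhdef, ← hvcdef] at hIV
  -- restriction identities
  have e1 : (fun i : {i : Fin r // i ∈ A} => n₁ i.1) = (fun i => m₁ i.1) := by
    funext i; simp [hn₁def, hm₁def, hvhdef, mixf, i.2]
  have e2 : (fun i : {i : Fin r // i ∈ B} => n₁ i.1) = (fun i => u i.1) := by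
    funext i
    have hiA : i.1 ∉ A := Finset.disjoint_right.mp hdAB i.2
    simp [hn₁def, hvhdef, mixf, hiA]
  have e3 : (fun i : {i : Fin r // i ∈ A} => n₂ i.1) = (fun i => m₂ i.1) := by
    funext i; simp [hn₂def, hm₂def, hvhdef, mixf, i.2]
  have e4 : (fun i : {i : Fin r // i ∈ B} => n₂ i.1) = (fun i => u i.1) := by
    funext i
    have hiA : i.1 ∉ A := Finset.disjoint_right.mp hdAB i.2
    simp [hn₂def, hvhdef, mixf, hiA]
  have e5 : (fun i : {i : Fin r // i ∈ A} => n₃ i.1) = (fun i => u i.1) := by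
    funext i; simp [hn₃def, hvcdef, mixf, i.2]
  have e6 : (fun i : {i : Fin r // i ∈ B} => n₃ i.1) = (fun i => m₁ i.1) := by
    funext i
    have hiA : i.1 ∉ A := Finset.disjoint_right.mp hdAB i.2
    simp [hn₃def, hm₁def, hvcdef, mixf, hiA]
  have e7 : (fun i : {i : Fin r // i ∈ A} => n₄ i.1) = (fun i => u i.1) := by
    funext i; simp [hn₄def, hvcdef, mixf, i.2]
  have e8 : (fun i : {i : Fin r // i ∈ B} => n₄ i.1) = (fun i => m₂ i.1) := by
    funext i
    have hiA : i.1 ∉ A := Finset.disjoint_right.mp hdAB i.2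
    simp [hn₄def, hm₂def, hvcdef, mixf, hiA]
  have hV : ψ m₁ * ψ m₂ * (ψ u * ψ u) = ψ n₁ * ψ n₂ * (ψ n₃ * ψ n₄) := by
    rw [hfg m₁, hfg m₂, hfg u, hfg n₁, hfg n₂, hfg n₃, hfg n₄,
      e1, e2, e3, e4, e5, e6, e7, e8]
    ring
  -- combine everything: η multiplies a nonzero quantity into itself
  have hX : (ψ v * ψ u) * (ψ u * ψ u) ≠ 0 :=
    mul_ne_zero (mul_ne_zero hv0 hu0) (mul_ne_zero hu0 hu0)
  apply hη1
  have hfin : η * ((ψ v * ψ u) * (ψ u * ψ u)) = 1 * ((ψ v * ψ u) * (ψ u * ψ u)) := by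
    linear_combination (-(ψ u * ψ u)) * hMv + hV + (ψ n₃ * ψ n₄) * hII +
      (ψ vh * ψ u) * hIII + (ψ u * ψ u) * hIV
  exact mul_right_cancel₀ hX hfin

theorem entanglement_lemma_general_phase (r : ℕ) (hr : 1 ≤ r)
    (η : ℂ) (hη : ‖η‖ = 1) (hη1 : η ≠ 1)
    (S : Finset (Fin r)) (hS : 2 ≤ S.card)
    (ψ : QState r) (hψ : UnitVec ψ) :
    SEntangled S ψ ∨ SEntangled S (gGate η S ψ) ∨
      (gGate η S ψ = ψ ∨
        ∃ T : Finset (Fin r), T ⊂ S ∧ gGate η S ψ = gGate η T ψ ∧ gGate η T ψ ≠ ψ) := by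
  classical
  have hη0 : η ≠ 0 := by intro h; rw [h] at hη; simp at hη
  by_cases h1 : SSeparable S ψ
  swap
  · exact Or.inl h1
  by_cases h2 : SSeparable S (gGate η S ψ)
  swap
  · exact Or.inr (Or.inl h2)
  refine Or.inr (Or.inr ?_)
  by_cases hu : ∃ u, ψ u ≠ 0 ∧ ∀ i ∈ S, u i = true
  swap
  · -- no support point has all `S`-bits one: the gate acts trivially
    left
    funext x
    show (if ∀ i ∈ S, x i = true then η * ψ x else ψ x) = ψ x
    split_ifs with h
    · have hx : ψ x = 0 := by
        by_contra hx
        exact hu ⟨x, hx, h⟩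
      rw [hx, mul_zero]
    · rfl
  obtain ⟨u, hu0, huS⟩ := hu
  right
  set T : Finset (Fin r) := S.filter (fun i => ∃ x, ψ x ≠ 0 ∧ x i = false) with hTdef
  have hTsub : T ⊆ S := Finset.filter_subset _ _
  have hiffTS : ∀ x : Fin r → Bool, ψ x ≠ 0 →
      ((∀ i ∈ S, x i = true) ↔ (∀ i ∈ T, x i = true)) := by
    intro x hx
    constructor
    · intro h i hi; exact h i (hTsub hi)
    · intro h i hiS
      by_cases hiT : i ∈ T
      · exact h i hiT
      · have : ¬ ∃ y, ψ y ≠ 0 ∧ y i = false := by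
          intro hexy
          exact hiT (Finset.mem_filter.mpr ⟨hiS, hexy⟩)
        by_contra hxi
        exact this ⟨x, hx, by simpa using hxi⟩
  have hgeq : gGate η S ψ = gGate η T ψ := by
    funext x
    show (if ∀ i ∈ S, x i = true then η * ψ x else ψ x)
        = (if ∀ i ∈ T, x i = true then η * ψ x else ψ x)
    by_cases hx : ψ x = 0
    · split_ifs <;> simp [hx]
    · by_cases hc : ∀ i ∈ S, x i = true
      · rw [if_pos hc, if_pos ((hiffTS x hx).mp hc)]
      · rw [if_neg hc, if_neg (fun h => hc ((hiffTS x hx).mpr h))]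
  have hgne : gGate η T ψ ≠ ψ := by
    intro h
    have hTu : ∀ i ∈ T, u i = true := fun i hi => huS i (hTsub hi)
    have := congrFun h u
    rw [show gGate η T ψ u = η * ψ u from if_pos hTu] at this
    exact hη1 ((mul_left_inj' hu0).mp (this.trans (one_mul (ψ u)).symm))
  by_cases hTS : T = S
  · -- T = S : both states separable gives a contradiction via `core`
    exfalso
    obtain ⟨A, B, ⟨hAne, hBne, hdAB, hcAB⟩, hAS, hBS, hsepAB⟩ := h1
    obtain ⟨A', B', ⟨hA'ne, hB'ne, hdA', hcA'⟩, hA'S, hB'S, hsep'⟩ := h2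
    have hunf : ∀ i ∈ S, ∃ x, ψ x ≠ 0 ∧ x i = false := by
      intro i hi
      have : i ∈ T := hTS ▸ hi
      exact (Finset.mem_filter.mp this).2
    have memB : ∀ i : Fin r, i ∉ A → i ∈ B := by
      intro i hi
      rcases Finset.mem_union.mp (hcAB ▸ Finset.mem_univ i) with h | h
      · exact absurd h hi
      · exact h
    have memB' : ∀ i : Fin r, i ∉ A' → i ∈ B' := by
      intro i hi
      rcases Finset.mem_union.mp (hcA' ▸ Finset.mem_univ i) with h | h
      · exact absurd h hi
      · exact h
    -- the four "some zero bit in block" propositions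
    set P11 := ∃ i, i ∈ S ∧ i ∈ A ∧ i ∈ A' ∧ ∃ x, ψ x ≠ 0 ∧ x i = false with hP11
    set P12 := ∃ i, i ∈ S ∧ i ∈ A ∧ i ∈ B' ∧ ∃ x, ψ x ≠ 0 ∧ x i = false with hP12
    set P21 := ∃ i, i ∈ S ∧ i ∈ B ∧ i ∈ A' ∧ ∃ x, ψ x ≠ 0 ∧ x i = false with hP21
    set P22 := ∃ i, i ∈ S ∧ i ∈ B ∧ i ∈ B' ∧ ∃ x, ψ x ≠ 0 ∧ x i = false with hP22
    have hor1 : P11 ∨ P12 := by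
      obtain ⟨i, hi⟩ := hAS
      obtain ⟨hiA, hiS⟩ := Finset.mem_inter.mp hi
      by_cases hiA' : i ∈ A'
      · exact Or.inl ⟨i, hiS, hiA, hiA', hunf i hiS⟩
      · exact Or.inr ⟨i, hiS, hiA, memB' i hiA', hunf i hiS⟩
    have hor2 : P21 ∨ P22 := by
      obtain ⟨i, hi⟩ := hBS
      obtain ⟨hiB, hiS⟩ := Finset.mem_inter.mp hi
      by_cases hiA' : i ∈ A'
      · exact Or.inl ⟨i, hiS, hiB, hiA', hunf i hiS⟩
      · exact Or.inr ⟨i, hiS, hiB, memB' i hiA', hunf i hiS⟩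
    have hor3 : P11 ∨ P21 := by
      obtain ⟨i, hi⟩ := hA'S
      obtain ⟨hiA', hiS⟩ := Finset.mem_inter.mp hi
      by_cases hiA : i ∈ A
      · exact Or.inl ⟨i, hiS, hiA, hiA', hunf i hiS⟩
      · exact Or.inr ⟨i, hiS, memB i hiA, hiA', hunf i hiS⟩
    have hor4 : P12 ∨ P22 := by
      obtain ⟨i, hi⟩ := hB'S
      obtain ⟨hiB', hiS⟩ := Finset.mem_inter.mp hi
      by_cases hiA : i ∈ A
      · exact Or.inl ⟨i, hiS, hiA, hiB', hunf i hiS⟩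
      · exact Or.inr ⟨i, hiS, memB i hiA, hiB', hunf i hiS⟩
    have hno1 : ¬ (P11 ∧ P22) := by
      rintro ⟨⟨i, hiS, hiA, hiA', z, hz0, hzi⟩, ⟨j, hjS, hjB, hjB', w, hw0, hwj⟩⟩
      exact core hη0 hη1 hdAB hcAB hdA' hcA' hsepAB hsep' hu0 huS hz0 hiS hiA hiA' hzi
        hw0 hjS hjB hjB' hwj
    have hno2 : ¬ (P12 ∧ P21) := by
      rintro ⟨⟨i, hiS, hiA, hiB', z, hz0, hzi⟩, ⟨j, hjS, hjB, hjA', w, hw0, hwj⟩⟩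
      exact core hη0 hη1 hdAB hcAB hdA'.symm (by rw [Finset.union_comm]; exact hcA')
        hsepAB (sep_symm hsep') hu0 huS hz0 hiS hiA hiB' hzi hw0 hjS hjB hjA' hwj
    rcases hor1 with p11 | p12
    · rcases hor2 with p21 | p22
      · rcases hor4 with p12 | p22
        · exact hno2 ⟨p12, p21⟩
        · exact hno1 ⟨p11, p22⟩
      · exact hno1 ⟨p11, p22⟩
    · rcases hor3 with p11 | p21
      · rcases hor2 with p21 | p22
        · exact hno2 ⟨p12, p21⟩
        · exact hno1 ⟨p11, p22⟩
      · exact hno2 ⟨p12, p21⟩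
  · exact ⟨T, ⟨hTsub, fun h => hTS (le_antisymm hTsub h)⟩, hgeq, hgne⟩
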